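/- Let ξ : [0,∞) → ℝ be continuous with ξ_0 = 0 and let (f_t) be the reverse Loewner flow driven by ξ, so that for each t ≥ 0 the map z ↦ f_t(z) is holomorphic and injective on ℍ with f_t(ℍ) ⊆ ℍ. Then for every t ≥ 0 and every y > 0, |f_t'(iy)| ≤ (4/y)·√(4t + y²), where f_t'(iy) denotes the complex derivative of f_t at iy. -/

import Mathlib

noncomputable section

open Set Metric

/-- The open upper half-plane `ℍ = {z ∈ ℂ : Im z > 0}`. -/
def UHP : Set ℂ := {z : ℂ | 0 < z.im}

/-- `IsReverseLoewnerFlow ξ f` asserts that `f` is the reverse Loewner flow driven by `ξ`: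
for each `z ∈ ℍ`, `t ↦ f t z` is an `ℍ`-valued continuous solution of the integral
equation `f_t(z) = z − ∫_0^t 2/f_s(z) ds − ξ_t` for all `t ≥ 0`. -/
structure IsReverseLoewnerFlow (ξ : ℝ → ℝ) (f : ℝ → ℂ → ℂ) : Prop where
  mem : ∀ z ∈ UHP, ∀ t : ℝ, 0 ≤ t → f t z ∈ UHP
  cont : ∀ z ∈ UHP, ContinuousOn (fun t => f t z) (Set.Ici 0)
  eqn : ∀ z ∈ UHP, ∀ t : ℝ, 0 ≤ t →
    f t z = z - (∫ s in (0:ℝ)..t, 2 / f s z) - ξ t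

lemma UHP_isOpen : IsOpen UHP := isOpen_lt continuous_const Complex.continuous_im

/-- Schwarz-type bound on the upper half plane. -/
lemma schwarz_uhp {g : ℂ → ℂ} (hg : DifferentiableOn ℂ g UHP) (hm : Set.MapsTo g UHP UHP)
    {y : ℝ} (hy : 0 < y) :
    ‖deriv g (Complex.I * y)‖ ≤ 4 * (g (Complex.I * y)).im / y := by
  set z₀ : ℂ := Complex.I * y with hz₀def
  have hz₀im : z₀.im = y := by simp [hz₀def]
  have hz₀ : z₀ ∈ UHP := by simp [UHP, hz₀im, hy]
  have hsub : ball z₀ y ⊆ UHP := by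
    intro w hw
    have h1 : |(w - z₀).im| ≤ ‖w - z₀‖ := Complex.abs_im_le_norm _
    have h2 : ‖w - z₀‖ < y := by
      rwa [← Complex.dist_eq, ← mem_ball]
    have := (abs_lt.1 (lt_of_le_of_lt h1 h2)).1
    simp only [Complex.sub_im, hz₀im] at this
    have : 0 < w.im := by linarith
    exact this
  set v : ℝ := (g z₀).im with hvdef
  have hv : 0 < v := hm hz₀
  set h : ℂ → ℂ := fun w => Complex.exp (Complex.I * g w / v) with hdef
  have hvne : (v : ℝ) ≠ 0 := hv.ne'
  have habs : ∀ w, ‖h w‖ = Real.exp (-(g w).im / v) := by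
    intro w
    rw [hdef]
    rw [Complex.norm_exp]
    congr 1
    rw [Complex.div_re, Complex.normSq_ofReal]
    simp only [Complex.mul_re, Complex.I_re, Complex.I_im, Complex.mul_im,
      Complex.ofReal_re, Complex.ofReal_im, zero_mul, one_mul, zero_sub, mul_zero, add_zero]
    field_simp
    ring
  have habslt : ∀ w ∈ ball z₀ y, ‖h w‖ < 1 := by
    intro w hw
    rw [habs]
    have : 0 < (g w).im := hm (hsub hw)
    rw [Real.exp_lt_one_iff]
    exact div_neg_of_neg_of_pos (by linarith) hv
  have habs0 : ‖h z₀‖ = Real.exp (-1) := by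
    rw [habs, ← hvdef]
    congr 1
    field_simp
  have hdiff : DifferentiableOn ℂ h (ball z₀ y) := by
    apply DifferentiableOn.cexp
    exact (((hg.mono hsub).const_mul Complex.I).div_const _)
  have hmaps : Set.MapsTo h (ball z₀ y) (ball (h z₀) (1 + Real.exp (-1))) := by
    intro w hw
    rw [mem_ball, dist_eq_norm]
    calc ‖h w - h z₀‖ ≤ ‖h w‖ + ‖h z₀‖ := norm_sub_le _ _
      _ < 1 + Real.exp (-1) := by
          have := habslt w hw
          rw [habs0]
          linarith
  have hschwarz := Complex.norm_deriv_le_div_of_mapsTo_ball hdiff (hmaps.mono_right ball_subset_closedBall) hy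
  -- compute deriv h z₀
  have hgd : DifferentiableAt ℂ g z₀ := hg.differentiableAt (UHP_isOpen.mem_nhds hz₀)
  have hhd : HasDerivAt h (Complex.exp (Complex.I * g z₀ / v) * (Complex.I * deriv g z₀ / v)) z₀ :=
    ((hgd.hasDerivAt.const_mul Complex.I).div_const _).cexp
  have e1 : ‖Complex.exp (Complex.I * g z₀ / v)‖ = Real.exp (-1) := habs0
  have hderiv : ‖deriv h z₀‖ = Real.exp (-1) * ‖deriv g z₀‖ / v := by
    rw [hhd.deriv, norm_mul, e1, norm_div, norm_mul, Complex.norm_I, one_mul,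
      Complex.norm_real, Real.norm_eq_abs, abs_of_pos hv, mul_div_assoc]
  rw [hderiv] at hschwarz
  have he1 : Real.exp 1 < 3 := by
    have := Real.exp_one_lt_d9
    linarith
  have hkey : ‖deriv g z₀‖ ≤ (1 + Real.exp (-1)) * Real.exp 1 * v / y := by
    have h1 : Real.exp (-1) * ‖deriv g z₀‖ / v ≤ (1 + Real.exp (-1)) / y := hschwarz
    have h2 : Real.exp (-1) * ‖deriv g z₀‖ ≤ (1 + Real.exp (-1)) / y * v := by
      rwa [div_le_iff₀ hv] at h1
    have h3 : ‖deriv g z₀‖ ≤ (1 + Real.exp (-1)) / y * v * Real.exp 1 := by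
      have := mul_le_mul_of_nonneg_right h2 (Real.exp_pos 1).le
      rwa [mul_comm (Real.exp (-1)) _, mul_assoc, ← Real.exp_add,
        neg_add_cancel, Real.exp_zero, mul_one] at this
    calc ‖deriv g z₀‖ ≤ (1 + Real.exp (-1)) / y * v * Real.exp 1 := h3
      _ = (1 + Real.exp (-1)) * Real.exp 1 * v / y := by ring
  refine hkey.trans ?_
  rw [div_le_div_iff₀ hy hy]
  have : (1 + Real.exp (-1)) * Real.exp 1 = Real.exp 1 + 1 := by
    rw [add_mul, one_mul, ← Real.exp_add, neg_add_cancel, Real.exp_zero]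
  rw [this]
  nlinarith [mul_pos hv hy, he1]

lemma im_bound (ξ : ℝ → ℝ) (hξ0 : ξ 0 = 0) (f : ℝ → ℂ → ℂ)
    (hrev : IsReverseLoewnerFlow ξ f)
    {z : ℂ} (hz : z ∈ UHP) {t : ℝ} (ht : 0 ≤ t) :
    (f t z).im ≤ Real.sqrt (4 * t + z.im ^ 2) := by
  set F : ℝ → ℂ := fun s => f s z with hF
  have hFmem : ∀ s, 0 ≤ s → 0 < (F s).im := fun s hs => hrev.mem z hz s hs
  have hFc : ContinuousOn F (Set.Ici 0) := hrev.cont z hz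
  have hFne : ∀ s ∈ Set.Ici (0:ℝ), F s ≠ 0 := by
    intro s hs h0
    have := hFmem s hs
    rw [h0] at this
    simp at this
  set G : ℝ → ℂ := fun s => 2 / F s with hG
  have hGc : ContinuousOn G (Set.Ici 0) := continuousOn_const.div hFc hFne
  have hu : ∀ s, 0 ≤ s → (F s).im = z.im - ∫ r in (0:ℝ)..s, (G r).im := by
    intro s hs
    have hint : IntervalIntegrable G MeasureTheory.volume 0 s :=
      (hGc.mono (by rw [Set.uIcc_of_le hs]; exact Set.Icc_subset_Ici_self)).intervalIntegrable
    have him : (∫ r in (0:ℝ)..s, (G r).im) = (∫ r in (0:ℝ)..s, G r).im := by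
      simpa using Complex.imCLM.intervalIntegral_comp_comm hint
    have heqn := hrev.eqn z hz s hs
    have : (F s).im = (z - (∫ r in (0:ℝ)..s, G r) - (ξ s : ℂ)).im := by
      rw [hF]; exact congrArg Complex.im heqn
    rw [this]
    simp [Complex.sub_im, him]
  have hderiv : ∀ x ∈ Set.Ioo 0 t, HasDerivAt (fun s => (F s).im) (-(G x).im) x := by
    intro x hx
    have hx0 : (0:ℝ) < x := hx.1
    have hnh : Set.Ici (0:ℝ) ∈ nhds x := Ici_mem_nhds hx0
    have hGca : ContinuousAt G x := hGc.continuousAt hnh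
    have hGim_c : ContinuousAt (fun r => (G r).im) x :=
      Complex.continuous_im.continuousAt.comp hGca
    have hint : IntervalIntegrable (fun r => (G r).im) MeasureTheory.volume 0 x := by
      apply ContinuousOn.intervalIntegrable
      apply (Complex.continuous_im.comp_continuousOn (hGc.mono ?_))
      rw [Set.uIcc_of_le hx0.le]; exact Set.Icc_subset_Ici_self
    have hmeas : StronglyMeasurableAtFilter (fun r => (G r).im) (nhds x) := by
      refine ContinuousOn.stronglyMeasurableAtFilter isOpen_Ioi ?_ x hx0
      exact (Complex.continuous_im.comp_continuousOn (hGc.mono (Set.Ioi_subset_Ici_self)))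
    have hFTC : HasDerivAt (fun s => ∫ r in (0:ℝ)..s, (G r).im) ((G x).im) x :=
      intervalIntegral.integral_hasDerivAt_right hint hmeas hGim_c
    have hU : HasDerivAt (fun s => z.im - ∫ r in (0:ℝ)..s, (G r).im) (-(G x).im) x :=
      hFTC.const_sub z.im
    exact hU.congr_of_eventuallyEq
      (Filter.eventuallyEq_of_mem hnh (fun s hs => hu s hs))
  set φ : ℝ → ℝ := fun s => (F s).im ^ 2 - 4 * s with hφ
  have hφd : ∀ x ∈ Set.Ioo 0 t, HasDerivAt φ (2 * (F x).im * (-(G x).im) - 4) x := by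
    intro x hx
    have h2 : HasDerivAt (fun s => (F s).im ^ 2) (2 * (F x).im * (-(G x).im)) x := by
      have := (hderiv x hx).fun_pow 2
      exact this.congr_deriv (by norm_num)
    have h3 : HasDerivAt (fun s : ℝ => 4 * s) 4 x := by
      simpa using (hasDerivAt_id x).const_mul (4:ℝ)
    exact h2.sub h3
  have hanti : AntitoneOn φ (Set.Icc 0 t) := by
    apply antitoneOn_of_deriv_nonpos (convex_Icc 0 t)
    · apply ContinuousOn.sub
      · exact ((Complex.continuous_im.comp_continuousOn
          (hFc.mono Set.Icc_subset_Ici_self)).pow 2)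
      · exact (continuous_const.mul continuous_id).continuousOn
    · intro x hx
      rw [interior_Icc] at hx
      exact ((hφd x hx).differentiableAt).differentiableWithinAt
    · intro x hx
      rw [interior_Icc] at hx
      rw [(hφd x hx).deriv]
      have hx0 : (0:ℝ) < x := hx.1
      have hupos := hFmem x hx0.le
      have hns : 0 < Complex.normSq (F x) := Complex.normSq_pos.2 (hFne x hx0.le)
      have him : (G x).im = -(2 * (F x).im / Complex.normSq (F x)) := by
        show (2 / F x).im = _
        rw [Complex.div_im]
        simp
      rw [him, neg_neg]
      have hle : (F x).im ^ 2 ≤ Complex.normSq (F x) := by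
        rw [Complex.normSq_apply]
        nlinarith [sq_nonneg (F x).re]
      have h4 : 2 * (F x).im * (2 * (F x).im / Complex.normSq (F x))
          = 4 * ((F x).im ^ 2 / Complex.normSq (F x)) := by ring
      have h5 : (F x).im ^ 2 / Complex.normSq (F x) ≤ 1 := by
        rw [div_le_one hns]; exact hle
      rw [h4]
      linarith
  have hF0 : F 0 = z := by
    have := hrev.eqn z hz 0 le_rfl
    simpa [hξ0] using this
  have hphit : φ t ≤ φ 0 :=
    hanti (Set.left_mem_Icc.2 ht) (Set.right_mem_Icc.2 ht) ht
  have hsq : (F t).im ^ 2 ≤ 4 * t + z.im ^ 2 := by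
    have : φ 0 = z.im ^ 2 := by simp [hφ, hF0]
    rw [this] at hphit
    have : (F t).im ^ 2 - 4 * t ≤ z.im ^ 2 := hphit
    linarith
  have hupos := hFmem t ht
  calc (F t).im = Real.sqrt ((F t).im ^ 2) := (Real.sqrt_sq hupos.le).symm
    _ ≤ Real.sqrt (4 * t + z.im ^ 2) := Real.sqrt_le_sqrt hsq

/-- **Corollary (derivative bound for the reverse flow).** Let `(f_t)` be the reverse
Loewner flow driven by a continuous `ξ` with `ξ_0 = 0`, such that each `f_t` is
holomorphic and injective on `ℍ` with `f_t(ℍ) ⊆ ℍ`.  Then for every `t ≥ 0` and `y > 0`,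
`|f_t'(iy)| ≤ (4/y)·√(4t + y²)`. -/
theorem reverse_flow_deriv_bound
    (ξ : ℝ → ℝ) (hξc : Continuous ξ) (hξ0 : ξ 0 = 0)
    (f : ℝ → ℂ → ℂ) (hrev : IsReverseLoewnerFlow ξ f)
    (hholo : ∀ t : ℝ, 0 ≤ t → DifferentiableOn ℂ (f t) UHP)
    (hinj : ∀ t : ℝ, 0 ≤ t → Set.InjOn (f t) UHP) :
    ∀ t : ℝ, 0 ≤ t → ∀ y : ℝ, 0 < y →
      ‖deriv (f t) (Complex.I * y)‖ ≤ (4 / y) * Real.sqrt (4 * t + y ^ 2) := by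
  intro t ht y hy
  have hz : Complex.I * (y:ℂ) ∈ UHP := by
    simp [UHP, Complex.mul_im, hy]
  have h1 := schwarz_uhp (hholo t ht) (fun w hw => hrev.mem w hw t ht) hy
  have him := im_bound ξ hξ0 f hrev hz ht
  have hzim : (Complex.I * (y:ℂ)).im = y := by simp
  rw [hzim] at him
  refine h1.trans ?_
  rw [div_mul_eq_mul_div]
  gcongr
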